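/- Let U ⊆ ℝⁿ be open, let k ≥ 1, and let u₁, …, u_k : U → ℝ be C² functions that are positive everywhere; set u = u₁⋯u_k and β_k = (k+1)/(2k). If at a point x ∈ U one has Σ_{i=1}^{k} Δuᵢ(x)/uᵢ(x) + Σ_{1 ≤ i < j ≤ k} ⟪∇(log uᵢ)(x), ∇(log uⱼ)(x)⟫ < c for some real number c, then Δ(log u)(x) < c − β_k · ‖∇(log u)(x)‖². -/

import Mathlib

set_option maxHeartbeats 1000000 in
private lemma norm_sum_sq_real' {F : Type*} [NormedAddCommGroup F] [InnerProductSpace ℝ F]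
    {k : ℕ} (v : Fin k → F) :
    ‖∑ i, v i‖^2 = ∑ i, ‖v i‖^2
      + 2 * ∑ i, ∑ j ∈ Finset.univ.filter (fun j => i < j), (inner ℝ (v i) (v j) : ℝ) := by
  have hfil : ∀ i : Fin k, Finset.univ.filter (fun j => i < j) = Finset.Ioi i := by
    intro i; ext j; simp
  simp_rw [hfil]
  rw [← real_inner_self_eq_norm_sq, sum_inner]
  simp_rw [inner_sum, ← real_inner_self_eq_norm_sq]
  have split : ∀ i : Fin k, ∑ j, (inner ℝ (v i) (v j) : ℝ)
      = (inner ℝ (v i) (v i) : ℝ) + (∑ j ∈ Finset.Ioi i, (inner ℝ (v i) (v j) : ℝ)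
        + ∑ j ∈ Finset.Iio i, (inner ℝ (v i) (v j) : ℝ)) := by
    intro i
    have hc : ({i} : Finset (Fin k))ᶜ = (Finset.Ioi i) ∪ (Finset.Iio i) := by
      ext j; simp [lt_or_lt_iff_ne, eq_comm]
    rw [← Finset.sum_add_sum_compl ({i} : Finset (Fin k)), Finset.sum_singleton, hc,
      Finset.sum_union (Finset.disjoint_Ioi_Iio i)]
  simp_rw [split, Finset.sum_add_distrib]
  have swap : ∑ i, ∑ j ∈ Finset.Iio i, (inner ℝ (v i) (v j) : ℝ)
      = ∑ i, ∑ j ∈ Finset.Ioi i, (inner ℝ (v i) (v j) : ℝ) := by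
    rw [Finset.sum_sigma', Finset.sum_sigma']
    refine Finset.sum_nbij' (fun p => ⟨p.2, p.1⟩) (fun p => ⟨p.2, p.1⟩) ?_ ?_ ?_ ?_ ?_ <;>
      simp [Finset.mem_sigma, real_inner_comm]
  rw [swap]; ring

/-- The Euclidean Laplacian: sum of the second partial derivatives along the
coordinate directions. -/
noncomputable def eLaplacian {n : ℕ} (f : EuclideanSpace ℝ (Fin n) → ℝ)
    (x : EuclideanSpace ℝ (Fin n)) : ℝ :=
  ∑ i, fderiv ℝ (fun y => fderiv ℝ f y (EuclideanSpace.single i 1)) x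
    (EuclideanSpace.single i 1)

section helpers
open Filter Topology

variable {n : ℕ}
local notation "E" => EuclideanSpace ℝ (Fin n)

private lemma norm_grad_sq' (g : E → ℝ) (x : E) :
    ‖gradient g x‖^2 = ∑ i, (fderiv ℝ g x (EuclideanSpace.single i 1))^2 := by
  rw [← real_inner_self_eq_norm_sq]
  rw [PiLp.inner_apply]
  refine Finset.sum_congr rfl fun i _ => ?_
  have : gradient g x i = fderiv ℝ g x (EuclideanSpace.single i 1) := by
    have h1 : (inner ℝ (gradient g x) (EuclideanSpace.single i (1:ℝ)) : ℝ)
        = fderiv ℝ g x (EuclideanSpace.single i 1) :=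
      InnerProductSpace.toDual_symm_apply
    rw [EuclideanSpace.inner_single_right] at h1
    simpa using h1
  simp [this, RCLike.inner_apply]

private lemma grad_eq_symm_fderiv' (g : E → ℝ) (x : E) :
    gradient g x = (InnerProductSpace.toDual ℝ _).symm (fderiv ℝ g x) := rfl

private lemma eLaplacian_congr' {f g : E → ℝ} {x : E} (h : f =ᶠ[𝓝 x] g) :
    eLaplacian f x = eLaplacian g x := by
  refine Finset.sum_congr rfl fun i _ => ?_
  have : (fun y => fderiv ℝ f y (EuclideanSpace.single i 1))
      =ᶠ[𝓝 x] fun y => fderiv ℝ g y (EuclideanSpace.single i 1) := by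
    filter_upwards [h.eventuallyEq_nhds] with y hy
    rw [hy.fderiv_eq]
  rw [this.fderiv_eq]

private lemma second_log' (f : E → ℝ) (x : E) (hf : ContDiffAt ℝ 2 f x) (hp : 0 < f x) (e : E) :
    fderiv ℝ (fun y => fderiv ℝ (fun z => Real.log (f z)) y e) x e
      = fderiv ℝ (fun y => fderiv ℝ f y e) x e / f x
        - (fderiv ℝ f x e)^2 / (f x)^2 := by
  have hpos : ∀ᶠ y in 𝓝 x, 0 < f y := hf.continuousAt.eventually_const_lt hp
  have hdiff : ∀ᶠ y in 𝓝 x, DifferentiableAt ℝ f y :=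
    (hf.eventually (by norm_num)).mono fun y hy => hy.differentiableAt (by norm_num)
  have hee : (fun y => fderiv ℝ (fun z => Real.log (f z)) y e)
      =ᶠ[𝓝 x] fun y => (f y)⁻¹ * fderiv ℝ f y e := by
    filter_upwards [hpos, hdiff] with y hy hd
    rw [(hd.hasFDerivAt.log hy.ne').fderiv]
    rfl
  have h1 : HasFDerivAt f (fderiv ℝ f x) x := (hf.differentiableAt (by norm_num)).hasFDerivAt
  have hinv : HasFDerivAt (fun y => (f y)⁻¹) ((-(f x^2)⁻¹) • fderiv ℝ f x) x :=
    (hasDerivAt_inv hp.ne').comp_hasFDerivAt x h1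
  have hD2 : HasFDerivAt (fderiv ℝ f) (fderiv ℝ (fderiv ℝ f) x) x :=
    ((hf.fderiv_right (m := 1) (by norm_num)).differentiableAt (by norm_num)).hasFDerivAt
  have heval : HasFDerivAt (fun y => fderiv ℝ f y e)
      ((ContinuousLinearMap.apply ℝ ℝ e).comp (fderiv ℝ (fderiv ℝ f) x)) x :=
    (ContinuousLinearMap.apply ℝ ℝ e).hasFDerivAt.comp x hD2
  have hmul := hinv.fun_mul heval
  have he2 : fderiv ℝ (fun y => fderiv ℝ f y e) x
      = (ContinuousLinearMap.apply ℝ ℝ e).comp (fderiv ℝ (fderiv ℝ f) x) := heval.fderiv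
  rw [hee.fderiv_eq, hmul.fderiv, he2]
  simp [ContinuousLinearMap.apply]
  field_simp
  ring

private lemma grad_log' (f : E → ℝ) (x : E) (hf : DifferentiableAt ℝ f x) (hp : 0 < f x) :
    gradient (fun y => Real.log (f y)) x = (f x)⁻¹ • gradient f x := by
  rw [grad_eq_symm_fderiv', grad_eq_symm_fderiv', (hf.hasFDerivAt.log hp.ne').fderiv]
  simp

private lemma lap_log' (f : E → ℝ) (x : E) (hf : ContDiffAt ℝ 2 f x) (hp : 0 < f x) :
    eLaplacian (fun y => Real.log (f y)) x
      = eLaplacian f x / f x - ‖gradient (fun y => Real.log (f y)) x‖^2 := by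
  have hd : DifferentiableAt ℝ f x := hf.differentiableAt (by norm_num)
  have hns : ‖gradient (fun y => Real.log (f y)) x‖^2
      = ∑ i, (fderiv ℝ f x (EuclideanSpace.single i 1))^2 / (f x)^2 := by
    rw [norm_grad_sq']
    refine Finset.sum_congr rfl fun i _ => ?_
    rw [(hd.hasFDerivAt.log hp.ne').fderiv]
    simp [div_eq_mul_inv]
    ring
  rw [hns, eLaplacian, eLaplacian, Finset.sum_div, ← Finset.sum_sub_distrib]
  exact Finset.sum_congr rfl fun i _ => second_log' f x hf hp _

private lemma grad_sum' (k : ℕ) (h : Fin k → E → ℝ) (x : E)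
    (hd : ∀ i, DifferentiableAt ℝ (h i) x) :
    gradient (fun y => ∑ i, h i y) x = ∑ i, gradient (h i) x := by
  rw [grad_eq_symm_fderiv', fderiv_fun_sum (fun i _ => hd i), map_sum]
  rfl

private lemma lap_sum' (k : ℕ) (h : Fin k → E → ℝ) (x : E)
    (hd : ∀ i, ContDiffAt ℝ 2 (h i) x) :
    eLaplacian (fun y => ∑ i, h i y) x = ∑ i, eLaplacian (h i) x := by
  have key : ∀ e : E, fderiv ℝ (fun y => fderiv ℝ (fun z => ∑ i, h i z) y e) x e
      = ∑ i, fderiv ℝ (fun y => fderiv ℝ (h i) y e) x e := by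
    intro e
    have hee : (fun y => fderiv ℝ (fun z => ∑ i, h i z) y e)
        =ᶠ[𝓝 x] fun y => ∑ i, fderiv ℝ (h i) y e := by
      have hall : ∀ᶠ y in 𝓝 x, ∀ i, DifferentiableAt ℝ (h i) y := by
        rw [eventually_all]
        exact fun i => ((hd i).eventually (by norm_num)).mono
          fun y hy => hy.differentiableAt (by norm_num)
      filter_upwards [hall] with y hy
      rw [fderiv_fun_sum (fun i _ => hy i)]
      simp
    rw [hee.fderiv_eq, fderiv_fun_sum, ContinuousLinearMap.sum_apply]
    intro i _
    exact ((ContinuousLinearMap.apply ℝ ℝ e).hasFDerivAt.comp x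
      (((hd i).fderiv_right (m := 1) (by norm_num)).differentiableAt
        (by norm_num)).hasFDerivAt).differentiableAt
  rw [eLaplacian]
  simp_rw [key]
  rw [Finset.sum_comm]
  rfl

end helpers

open Filter Topology in
/-- the pointwise differential inequality
`Δ(log u) < c − β_k ‖∇(log u)‖²` for `u = u₁ ⋯ u_k`, `β_k = (k+1)/(2k)`. -/
theorem stmt_1 {n : ℕ} (U : Set (EuclideanSpace ℝ (Fin n))) (hU : IsOpen U)
    (k : ℕ) (hk : 1 ≤ k) (u : Fin k → EuclideanSpace ℝ (Fin n) → ℝ)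
    (hreg : ∀ i, ContDiffOn ℝ 2 (u i) U) (hpos : ∀ i, ∀ x ∈ U, 0 < u i x)
    (c : ℝ) (x : EuclideanSpace ℝ (Fin n)) (hx : x ∈ U)
    (h : ∑ i, eLaplacian (u i) x / u i x
        + ∑ i, ∑ j ∈ Finset.univ.filter (fun j => i < j),
            (inner ℝ (gradient (fun y => Real.log (u i y)) x)
                   (gradient (fun y => Real.log (u j y)) x) : ℝ) < c) :
    eLaplacian (fun y => Real.log (∏ i, u i y)) x
      < c - (((k : ℝ) + 1) / (2 * (k : ℝ))) *
          ‖gradient (fun y => Real.log (∏ i, u i y)) x‖ ^ 2 := by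
  have hC : ∀ i, ContDiffAt ℝ 2 (u i) x := fun i => (hreg i).contDiffAt (hU.mem_nhds hx)
  have hup : ∀ i, 0 < u i x := fun i => hpos i x hx
  have hlogC : ∀ i, ContDiffAt ℝ 2 (fun y => Real.log (u i y)) x :=
    fun i => (hC i).log (hup i).ne'
  set v : Fin k → EuclideanSpace ℝ (Fin n) :=
    fun i => gradient (fun y => Real.log (u i y)) x with hv
  -- log of the product is eventually the sum of logs
  have hprod : (fun y => Real.log (∏ i, u i y))
      =ᶠ[𝓝 x] fun y => ∑ i, Real.log (u i y) := by
    have hall : ∀ᶠ y in 𝓝 x, ∀ i, 0 < u i y := by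
      rw [eventually_all]
      exact fun i => (hC i).continuousAt.eventually_const_lt (hup i)
    filter_upwards [hall] with y hy
    exact Real.log_prod fun i _ => (hy i).ne'
  have hlap : eLaplacian (fun y => Real.log (∏ i, u i y)) x
      = ∑ i, (eLaplacian (u i) x / u i x - ‖v i‖^2) := by
    rw [eLaplacian_congr' hprod, lap_sum' k _ x hlogC]
    exact Finset.sum_congr rfl fun i _ => lap_log' (u i) x (hC i) (hup i)
  have hgrad : gradient (fun y => Real.log (∏ i, u i y)) x = ∑ i, v i := by
    rw [hprod.gradient_eq, grad_sum' k _ x fun i => (hlogC i).differentiableAt (by norm_num)]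
  rw [hlap, hgrad]
  set S : EuclideanSpace ℝ (Fin n) := ∑ i, v i with hS
  set A : ℝ := ∑ i, ‖v i‖^2 with hA
  set B : ℝ := ∑ i, ∑ j ∈ Finset.univ.filter (fun j => i < j), (inner ℝ (v i) (v j) : ℝ) with hB
  have hid : ‖S‖^2 = A + 2 * B := norm_sum_sq_real' v
  have hK : (1 : ℝ) ≤ (k : ℝ) := by exact_mod_cast hk
  have hCS : ‖S‖^2 ≤ (k : ℝ) * A := by
    have h1 : ‖S‖ ≤ ∑ i, ‖v i‖ := norm_sum_le _ _
    have h2 : ‖S‖^2 ≤ (∑ i, ‖v i‖)^2 := by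
      exact pow_le_pow_left₀ (norm_nonneg _) h1 2
    have h3 : (∑ i, ‖v i‖)^2 ≤ (Finset.univ.card : ℝ) * ∑ i, ‖v i‖^2 :=
      sq_sum_le_card_mul_sum_sq
    simpa [hA] using h2.trans h3
  have hsum : ∑ i, (eLaplacian (u i) x / u i x - ‖v i‖^2)
      = (∑ i, eLaplacian (u i) x / u i x) - A := by
    rw [Finset.sum_sub_distrib]
  rw [hsum]
  have hbeta : (((k : ℝ) + 1) / (2 * (k : ℝ))) * ‖S‖^2 ≤ (‖S‖^2 + A) / 2 := by
    rw [div_mul_eq_mul_div, div_le_div_iff₀ (by linarith) (by norm_num)]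
    nlinarith [hCS]
  have hB' : (‖S‖^2 + A) / 2 = A + B := by rw [hid]; ring
  have hc : (∑ i, eLaplacian (u i) x / u i x) + B < c := h
  linarith [hbeta, hB'.le]
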